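/- For a nanophrase P over α and letters A,B with |B| = τ(|A|) arranged as xAByBAz, and any letter D ∉ {A,B} whose orbit under τ is free (τ(|D|) ≠ |D|), if the orbit of |A| is also free, then σ_P^j(D,A) = −σ_P^j(D,B), hence σ_P^j(D,A) + σ_P^j(D,B) = 0. -/

import Mathlib

/-- A phrase over alphabet `α`: a flattened list of entries where `none` is the
component separator `|` and `some (n, a)` is an occurrence of the letter with
name `n` and projection `a ∈ α`. -/
abbrev Phrase (α : Type) := List (Option (ℕ × α))

/-- `P` is a nanophrase: every occurring letter occurs exactly twice, and a
letter name determines its projection. -/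
def isNanoP {α : Type} [DecidableEq α] (P : Phrase α) : Prop :=
  ∀ p ∈ P.reduceOption, P.reduceOption.count p = 2 ∧
    ∀ q ∈ P.reduceOption, q.1 = p.1 → q.2 = p.2

/-- The three `(Q,R,S)`-homotopy moves on phrases. -/
inductive PMove {α : Type} (Q : Set α) (R : Set (α × α)) (S : Set (α × α × α)) :
    Phrase α → Phrase α → Prop
  | m1 (x y : Phrase α) (n : ℕ) (a : α) (h : a ∈ Q) :
      PMove Q R S (x ++ [some (n, a), some (n, a)] ++ y) (x ++ y)
  | m2 (x y z : Phrase α) (n m : ℕ) (a b : α) (h : (a, b) ∈ R) :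
      PMove Q R S
        (x ++ [some (n, a), some (m, b)] ++ y ++ [some (m, b), some (n, a)] ++ z)
        (x ++ y ++ z)
  | m3 (x y z t : Phrase α) (n m p : ℕ) (a b c : α) (h : (a, b, c) ∈ S) :
      PMove Q R S
        (x ++ [some (n, a), some (m, b)] ++ y ++ [some (n, a), some (p, c)] ++ z ++
          [some (m, b), some (p, c)] ++ t)
        (x ++ [some (m, b), some (n, a)] ++ y ++ [some (p, c), some (n, a)] ++ z ++
          [some (p, c), some (m, b)] ++ t)

/-- Isomorphism of phrases: an injective renaming of letter names preserving
projections and the phrase structure. -/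
def PIso {α : Type} (P₁ P₂ : Phrase α) : Prop :=
  ∃ f : Equiv.Perm ℕ, P₂ = P₁.map (Option.map fun q => (f q.1, q.2))

/-- One step of `(Q,R,S)`-homotopy: an isomorphism, a move, or an inverse move. -/
def PStep {α : Type} (Q : Set α) (R : Set (α × α)) (S : Set (α × α × α))
    (P₁ P₂ : Phrase α) : Prop :=
  PIso P₁ P₂ ∨ PMove Q R S P₁ P₂ ∨ PMove Q R S P₂ P₁

/-- `(Q,R,S)`-homotopy of phrases. -/
def PHomotopic {α : Type} (Q : Set α) (R : Set (α × α)) (S : Set (α × α × α)) :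
    Phrase α → Phrase α → Prop :=
  Relation.ReflTransGen (PStep Q R S)

/-- The number of components (length) of a phrase. -/
def compCount {α : Type} (P : Phrase α) : ℕ := (P.filter fun o => o.isNone).length + 1

/-- The data of a complete representative system for the orbits of the
involution `τ`: orbits are indexed by `1,…,l+m`, the first `l` being free
(size 2) and the last `m` fixed points; `rep q` is the chosen representative of
the `q`-th orbit and `orb a` is the index of the orbit of `a`. -/
def IsCRS {α : Type} (τ : α → α) (l m : ℕ) (rep : ℕ → α) (orb : α → ℕ) : Prop :=
  Function.Involutive τ ∧
  (∀ a : α, 1 ≤ orb a ∧ orb a ≤ l + m) ∧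
  (∀ a : α, a = rep (orb a) ∨ a = τ (rep (orb a))) ∧
  (∀ q : ℕ, 1 ≤ q → q ≤ l + m → orb (rep q) = q) ∧
  (∀ q : ℕ, 1 ≤ q → q ≤ l + m → (q ≤ l ↔ τ (rep q) ≠ rep q)) ∧
  (∀ a : α, orb (τ a) = orb a)

/-- The subgroup of `∏_{(p,q)} ℤ` by which one quotients to obtain the mixed
group `∏ K_{(p,q)}` with `K_{(p,q)} = ℤ` if `p,q ≤ l` and `ℤ/2ℤ` otherwise. -/
def Ksub (l : ℕ) : AddSubgroup ((ℕ × ℕ) → ℤ) where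
  carrier := {f | ∀ pq : ℕ × ℕ,
    (pq.1 ≤ l ∧ pq.2 ≤ l → f pq = 0) ∧ (¬(pq.1 ≤ l ∧ pq.2 ≤ l) → (2 : ℤ) ∣ f pq)}
  zero_mem' := fun pq => ⟨fun _ => rfl, fun _ => dvd_zero 2⟩
  add_mem' := by
    intro f g hf hg pq
    refine ⟨fun h => ?_, fun h => ?_⟩
    · show f pq + g pq = 0
      rw [(hf pq).1 h, (hg pq).1 h, add_zero]
    · exact dvd_add ((hf pq).2 h) ((hg pq).2 h)
  neg_mem' := by
    intro f hf pq
    refine ⟨fun h => ?_, fun h => ?_⟩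
    · show -f pq = 0
      rw [(hf pq).1 h, neg_zero]
    · exact dvd_neg.mpr ((hf pq).2 h)

/-- The group `∏ K_{(p,q)}`, `K_{(p,q)} = ℤ` if `p,q ≤ l`, else `ℤ/2ℤ`. -/
def KG (l : ℕ) := ((ℕ × ℕ) → ℤ) ⧸ Ksub l

instance (l : ℕ) : AddCommGroup (KG l) := QuotientAddGroup.Quotient.addCommGroup _

/-- The canonical projection onto `∏ K_{(p,q)}`. -/
def kmk (l : ℕ) : ((ℕ × ℕ) → ℤ) → KG l := QuotientAddGroup.mk

/-- The basis vector `e_{(p,q)}`. -/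
def ehat (p q : ℕ) : (ℕ × ℕ) → ℤ := fun pq => if pq = (p, q) then 1 else 0

/-- The coordinate of `v ∈ ∏ K_{(p,q)}` at `pq` is zero (as an element of `ℤ`
if `pq` is a free-free pair, of `ℤ/2ℤ` otherwise). -/
def ZeroCoord (l : ℕ) (v : KG l) (pq : ℕ × ℕ) : Prop :=
  ∀ f : (ℕ × ℕ) → ℤ, kmk l f = v →
    ((pq.1 ≤ l ∧ pq.2 ≤ l → f pq = 0) ∧ (¬(pq.1 ≤ l ∧ pq.2 ≤ l) → (2 : ℤ) ∣ f pq))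

/-- `v` is of type (i): its coordinates `(r,s)` with `r > l` all vanish. -/
def TypeI (l : ℕ) (v : ℕ → KG l) : Prop :=
  ∀ (j r s : ℕ), l < r → ZeroCoord l (v j) (r, s)

/-- `v` is of type (ii): its coordinates `(r,s)` with `r ≤ l` all vanish. -/
def TypeII (l : ℕ) (v : ℕ → KG l) : Prop :=
  ∀ (j r s : ℕ), r ≤ l → ZeroCoord l (v j) (r, s)

/-- `ε(a) = +1` if `a` is a chosen representative, `−1` otherwise. -/
def eps {α : Type} [DecidableEq α] (rep : ℕ → α) (orb : α → ℕ) (a : α) : ℤ :=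
  if a = rep (orb a) then 1 else -1

/-- Flatten a phrase, recording for each occurrence its letter name, projection,
and the (1-based) index of the component in which it occurs. -/
def flat {α : Type} : Phrase α → ℕ → List (ℕ × α × ℕ)
  | [], _ => []
  | Option.none :: P, i => flat P (i + 1)
  | Option.some q :: P, i => (q.1, q.2, i) :: flat P i

/-- The positions (0-based, in the flattening of `P`) of the occurrences of the
letter named `n`. -/
def posL {α : Type} (P : Phrase α) (n : ℕ) : List ℕ :=
  ((((flat P 1).zipIdx.map Prod.swap).filter fun iq => iq.2.1 = n).map Prod.fst)

/-- Position of the first occurrence of the letter named `n`. -/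
def pos1 {α : Type} (P : Phrase α) (n : ℕ) : ℕ := (posL P n).headI

/-- Position of the second occurrence of the letter named `n`. -/
def pos2 {α : Type} (P : Phrase α) (n : ℕ) : ℕ := (posL P n).getLast!

/-- The projection in `α` of the letter named `n`. -/
def projP {α : Type} [Inhabited α] (P : Phrase α) (n : ℕ) : α :=
  (((flat P 1).filter fun q => q.1 = n).headI).2.1

/-- The component containing the first occurrence of the letter named `n`. -/
def comp1 {α : Type} [Inhabited α] (P : Phrase α) (n : ℕ) : ℕ :=
  ((((flat P 1).filter fun q => q.1 = n).map fun q => q.2.2)).headI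

/-- The component containing the second occurrence of the letter named `n`. -/
def comp2 {α : Type} [Inhabited α] (P : Phrase α) (n : ℕ) : ℕ :=
  ((((flat P 1).filter fun q => q.1 = n).map fun q => q.2.2)).getLast!

/-- Fukunaga's `σ_P^j(A,B)` (a lift to `∏ ℤ`; its class in `∏ K_{(p,q)}` is the
actual value): `± e_{(p,q)}` according to the interlacement pattern of `A,B`,
the component of the relevant occurrence of `B`, and whether `|B|` is a chosen
representative; `0` if `A` and `B` are not interlaced. -/
def sigmaHat {α : Type} [DecidableEq α] [Inhabited α] (rep : ℕ → α) (orb : α → ℕ)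
    (P : Phrase α) (j : ℕ) (nA nB : ℕ) : (ℕ × ℕ) → ℤ :=
  if pos1 P nA < pos1 P nB ∧ pos1 P nB < pos2 P nA ∧ pos2 P nA < pos2 P nB ∧
      comp2 P nB = j then
    eps rep orb (projP P nB) • ehat (orb (projP P nA)) (orb (projP P nB))
  else if pos1 P nB < pos1 P nA ∧ pos1 P nA < pos2 P nB ∧ pos2 P nB < pos2 P nA ∧
      comp1 P nB = j then
    (-eps rep orb (projP P nB)) • ehat (orb (projP P nA)) (orb (projP P nB))
  else 0

/-- The list of letter names occurring in `P`. -/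
def lettersP {α : Type} (P : Phrase α) : List ℕ :=
  ((P.reduceOption.map Prod.fst)).dedup

/-- The list `𝒜_j` of letter names occurring in the `j`-th component of `P`. -/
def compLetters {α : Type} (P : Phrase α) (j : ℕ) : List ℕ :=
  ((((flat P 1).filter fun q => q.2.2 = j).map fun q => q.1)).dedup

/-- A lift of `l_{P,j}(A) = Σ_{X ∈ 𝒜} σ_P^j(A,X)`. -/
def lHat {α : Type} [DecidableEq α] [Inhabited α] (rep : ℕ → α) (orb : α → ℕ)
    (P : Phrase α) (nA : ℕ) (j : ℕ) : (ℕ × ℕ) → ℤ :=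
  ((lettersP P).map fun nX => sigmaHat rep orb P j nA nX).sum

/-- `l_P(A) ∈ (∏ K_{(p,q)})^k`, as a function of the component index `j`. -/
def lP {α : Type} [DecidableEq α] [Inhabited α] (l : ℕ) (rep : ℕ → α) (orb : α → ℕ)
    (P : Phrase α) (nA : ℕ) : ℕ → KG l :=
  fun j => kmk l (lHat rep orb P nA j)

open Classical in
/-- The type (i) (`ℤ`-valued) part of `(B_P)_j`:
`(B_P)_j(v) = Σ_{A ∈ 𝒜_j, l_P(A) = v} ε(A)` if `v` is of type (i), else `0`. -/
noncomputable def B1 {α : Type} [DecidableEq α] [Inhabited α] (l : ℕ)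
    (rep : ℕ → α) (orb : α → ℕ) (P : Phrase α) (j : ℕ) (v : ℕ → KG l) : ℤ :=
  if TypeI l v then
    (((compLetters P j).filter fun nA => lP l rep orb P nA = v).map fun nA =>
      eps rep orb (projP P nA)).sum
  else 0

open Classical in
/-- The type (ii) (`ℤ/2ℤ`-valued) part of `(B_P)_j`:
`(B_P)_j(v) = Σ_{A ∈ 𝒜_j, l_P(A) = v} ε(A) mod 2` if `v` is of type (ii), else `0`. -/
noncomputable def B2 {α : Type} [DecidableEq α] [Inhabited α] (l : ℕ)
    (rep : ℕ → α) (orb : α → ℕ) (P : Phrase α) (j : ℕ) (v : ℕ → KG l) : ZMod 2 :=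
  if TypeII l v then
    ((((compLetters P j).filter fun nA => lP l rep orb P nA = v).map fun nA =>
      eps rep orb (projP P nA)).sum : ZMod 2)
  else 0

/-- Equality of the invariants `S_o` of two nanophrases: the maps `(B_P)_j`
agree (on nonzero vectors, where they are defined). -/
def SoEq {α : Type} [DecidableEq α] [Inhabited α] (l : ℕ) (rep : ℕ → α)
    (orb : α → ℕ) (P₁ P₂ : Phrase α) : Prop :=
  ∀ (j : ℕ) (v : ℕ → KG l), v ≠ 0 →
    B1 l rep orb P₁ j v = B1 l rep orb P₂ j v ∧
    B2 l rep orb P₁ j v = B2 l rep orb P₂ j v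

namespace Stmt13Aux

def nnc {α : Type} (u : Phrase α) : ℕ := (u.filter Option.isNone).length

lemma flat_append {α : Type} (u v : Phrase α) (i : ℕ) :
    flat (u ++ v) i = flat u i ++ flat v (i + nnc u) := by
  induction u generalizing i with
  | nil => simp [flat, nnc]
  | cons o u ih =>
    cases o with
    | none =>
      have h1 : nnc (Option.none :: u) = nnc u + 1 := by simp [nnc]
      show flat (u ++ v) (i + 1) = flat u (i + 1) ++ flat v (i + nnc (Option.none :: u))
      rw [ih, h1, show i + (nnc u + 1) = i + 1 + nnc u by omega]
    | some q =>
      have h1 : nnc (Option.some q :: u) = nnc u := by simp [nnc]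
      show (q.1, q.2, i) :: flat (u ++ v) i
          = ((q.1, q.2, i) :: flat u i) ++ flat v (i + nnc (Option.some q :: u))
      rw [ih, h1, List.cons_append]

lemma flat_names {α : Type} (P : Phrase α) (i : ℕ) :
    (flat P i).map (fun q => (q.1, q.2.1)) = P.reduceOption := by
  induction P generalizing i with
  | nil => rfl
  | cons o P ih =>
    cases o with
    | none => simpa [flat] using ih (i + 1)
    | some q => simp [flat, ih]

def gL {α : Type} (n s : ℕ) (L : List (ℕ × α × ℕ)) : List ℕ :=
  (((L.zipIdx s).map Prod.swap).filter fun iq => iq.2.1 = n).map Prod.fst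

lemma posL_eq_gL {α : Type} (P : Phrase α) (n : ℕ) : posL P n = gL n 0 (flat P 1) := rfl

lemma gL_nil {α : Type} (n s : ℕ) : gL n s ([] : List (ℕ × α × ℕ)) = [] := rfl

lemma gL_append {α : Type} (n s : ℕ) (L1 L2 : List (ℕ × α × ℕ)) :
    gL n s (L1 ++ L2) = gL n s L1 ++ gL n (s + L1.length) L2 := by
  simp [gL, List.zipIdx_append, List.filter_append]

lemma gL_cons {α : Type} (n s : ℕ) (q : ℕ × α × ℕ) (L : List (ℕ × α × ℕ)) :
    gL n s (q :: L) = (if q.1 = n then [s] else []) ++ gL n (s + 1) L := by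
  simp only [gL, List.zipIdx_cons, List.map_cons, Prod.swap_prod_mk, List.filter_cons]
  split
  · next h => simp at h; simp [h]
  · next h => simp at h; simp [h]

lemma gL_of_not_mem {α : Type} {n : ℕ} {L : List (ℕ × α × ℕ)}
    (h : ∀ q ∈ L, q.1 ≠ n) (s : ℕ) : gL n s L = [] := by
  induction L generalizing s with
  | nil => rfl
  | cons q L ih =>
    rw [gL_cons, if_neg (h q (by simp)), List.nil_append]
    exact ih (fun q hq => h q (by simp [hq])) _

lemma gL_bounds {α : Type} {n : ℕ} (L : List (ℕ × α × ℕ)) (s : ℕ) :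
    ∀ i ∈ gL n s L, s ≤ i ∧ i < s + L.length := by
  induction L generalizing s with
  | nil => simp [gL_nil]
  | cons q L ih =>
    intro i hi
    rw [gL_cons] at hi
    rcases List.mem_append.mp hi with h | h
    · split at h <;> simp_all
    · have := ih (s + 1) i h
      simp only [List.length_cons]
      omega

lemma gL_ne_nil {α : Type} {n : ℕ} {L : List (ℕ × α × ℕ)}
    (h : ∃ q ∈ L, q.1 = n) (s : ℕ) : gL n s L ≠ [] := by
  induction L generalizing s with
  | nil => simp at h
  | cons q L ih =>
    rw [gL_cons]
    rcases h with ⟨p, hp, hpn⟩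
    rcases List.mem_cons.mp hp with rfl | hp
    · simp [hpn]
    · intro hc
      rcases List.append_eq_nil_iff.mp hc with ⟨-, h2⟩
      exact ih ⟨p, hp, hpn⟩ (s + 1) h2

lemma headI_mem {l : List ℕ} (h : l ≠ []) : l.headI ∈ l := by
  cases l with
  | nil => exact absurd rfl h
  | cons a l => simp

lemma getLast!_mem {l : List ℕ} (h : l ≠ []) : l.getLast! ∈ l := by
  cases l with
  | nil => exact absurd rfl h
  | cons a l =>
    show (a :: l).getLast (by simp) ∈ _
    exact List.getLast_mem _

end Stmt13Aux

/-- for a nanophrase `P = xAByBAz` with `|B| = τ(|A|)` and any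
letter `D ∉ {A,B}` with free `τ`-orbit, if the orbit of `|A|` is also free, then
`σ_P^j(D,A) = −σ_P^j(D,B)`, hence `σ_P^j(D,A) + σ_P^j(D,B) = 0`. -/
theorem stmt13 {α : Type} [DecidableEq α] [Inhabited α] (τ : α → α) (l m : ℕ)
    (rep : ℕ → α) (orb : α → ℕ) (hcrs : IsCRS τ l m rep orb)
    (x y z : Phrase α) (nA nB : ℕ) (a : α)
    (P : Phrase α)
    (hP : P = x ++ [some (nA, a), some (nB, τ a)] ++ y ++
      [some (nB, τ a), some (nA, a)] ++ z)
    (hnano : isNanoP P) (nD : ℕ) (hD : nD ∈ lettersP P) (hDA : nD ≠ nA)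
    (hDB : nD ≠ nB) (hDfree : τ (projP P nD) ≠ projP P nD) (hAfree : τ a ≠ a) :
    ∀ j : ℕ,
      kmk l (sigmaHat rep orb P j nD nA) = -kmk l (sigmaHat rep orb P j nD nB) ∧
      kmk l (sigmaHat rep orb P j nD nA) + kmk l (sigmaHat rep orb P j nD nB) = 0 := by
  classical
  obtain ⟨hinv, -, hrepor, -, -, horbτ⟩ := hcrs
  have hmemA : (nA, a) ∈ P.reduceOption := by
    rw [hP]; simp [List.reduceOption_append]
  have hmemB : (nB, τ a) ∈ P.reduceOption := by
    rw [hP]; simp [List.reduceOption_append]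
  have hAB : nA ≠ nB := by
    intro h
    exact hAfree ((hnano (nA, a) hmemA).2 (nB, τ a) hmemB h.symm)
  have hnameA : ∀ q ∈ P.reduceOption, q.1 = nA → q = (nA, a) := by
    intro q hq h
    exact Prod.ext h ((hnano (nA, a) hmemA).2 q hq h)
  have hnameB : ∀ q ∈ P.reduceOption, q.1 = nB → q = (nB, τ a) := by
    intro q hq h
    exact Prod.ext h ((hnano (nB, τ a) hmemB).2 q hq h)
  have hsplit : P.reduceOption = x.reduceOption ++ ((nA, a) :: (nB, τ a) ::
      (y.reduceOption ++ ((nB, τ a) :: (nA, a) :: z.reduceOption))) := by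
    rw [hP]; simp [List.reduceOption_append]
  have hBApair : (nA, a) ≠ (nB, τ a) := by
    intro h; exact hAB (congrArg Prod.fst h)
  have hABpair : (nB, τ a) ≠ (nA, a) := fun h => hBApair h.symm
  have hcA := (hnano (nA, a) hmemA).1
  have hcB := (hnano (nB, τ a) hmemB).1
  rw [hsplit] at hcA hcB
  simp only [List.count_append, List.count_cons_self,
    List.count_cons_of_ne hBApair, List.count_cons_of_ne hABpair] at hcA hcB
  have hxA : (nA, a) ∉ x.reduceOption := by rw [← List.count_eq_zero]; omega
  have hyA : (nA, a) ∉ y.reduceOption := by rw [← List.count_eq_zero]; omega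
  have hzA : (nA, a) ∉ z.reduceOption := by rw [← List.count_eq_zero]; omega
  have hxB : (nB, τ a) ∉ x.reduceOption := by rw [← List.count_eq_zero]; omega
  have hyB : (nB, τ a) ∉ y.reduceOption := by rw [← List.count_eq_zero]; omega
  have hzB : (nB, τ a) ∉ z.reduceOption := by rw [← List.count_eq_zero]; omega
  set i1 : ℕ := 1 + Stmt13Aux.nnc x with hi1
  set i2 : ℕ := i1 + Stmt13Aux.nnc y with hi2
  have hF : flat P 1 = flat x 1 ++ ((nA, a, i1) :: (nB, τ a, i1) ::
      (flat y i1 ++ ((nB, τ a, i2) :: (nA, a, i2) :: flat z i2))) := by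
    rw [hP, show x ++ [some (nA, a), some (nB, τ a)] ++ y ++ [some (nB, τ a), some (nA, a)] ++ z
        = x ++ (Option.some (nA, a) :: Option.some (nB, τ a) ::
          (y ++ (Option.some (nB, τ a) :: Option.some (nA, a) :: z))) by simp]
    rw [Stmt13Aux.flat_append]
    simp only [flat]
    rw [Stmt13Aux.flat_append]
    simp only [flat]
    rfl
  -- no names nA, nB inside flattened x, y, z
  have hnames : ∀ (u : Phrase α) (i : ℕ), (nA, a) ∉ u.reduceOption →
      (nB, τ a) ∉ u.reduceOption → u.reduceOption ⊆ P.reduceOption →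
      ∀ q ∈ flat u i, q.1 ≠ nA ∧ q.1 ≠ nB := by
    intro u i hA hB hsub q hq
    have hmem : (q.1, q.2.1) ∈ u.reduceOption := by
      rw [← Stmt13Aux.flat_names u i]; exact List.mem_map_of_mem hq
    constructor
    · intro h
      have h2 := hnameA _ (hsub hmem) h
      rw [h2] at hmem; exact hA hmem
    · intro h
      have h2 := hnameB _ (hsub hmem) h
      rw [h2] at hmem; exact hB hmem
  have hsubx : x.reduceOption ⊆ P.reduceOption := by
    rw [hsplit]; intro p hp; simp [hp]
  have hsuby : y.reduceOption ⊆ P.reduceOption := by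
    rw [hsplit]; intro p hp; simp [hp]
  have hsubz : z.reduceOption ⊆ P.reduceOption := by
    rw [hsplit]; intro p hp; simp [hp]
  have hfx := hnames x 1 hxA hxB hsubx
  have hfy := hnames y i1 hyA hyB hsuby
  have hfz := hnames z i2 hzA hzB hsubz
  set c : ℕ := (flat x 1).length with hc
  set k : ℕ := (flat y i1).length with hk
  -- positions of A and B
  have hposA : posL P nA = [c, c + 3 + k] := by
    rw [Stmt13Aux.posL_eq_gL, hF, Stmt13Aux.gL_append, Stmt13Aux.gL_cons, Stmt13Aux.gL_cons,
      Stmt13Aux.gL_append, Stmt13Aux.gL_cons, Stmt13Aux.gL_cons,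
      Stmt13Aux.gL_of_not_mem (fun q hq => (hfx q hq).1),
      Stmt13Aux.gL_of_not_mem (fun q hq => (hfy q hq).1),
      Stmt13Aux.gL_of_not_mem (fun q hq => (hfz q hq).1)]
    simp [Ne.symm hAB]
    omega
  have hposB : posL P nB = [c + 1, c + 2 + k] := by
    rw [Stmt13Aux.posL_eq_gL, hF, Stmt13Aux.gL_append, Stmt13Aux.gL_cons, Stmt13Aux.gL_cons,
      Stmt13Aux.gL_append, Stmt13Aux.gL_cons, Stmt13Aux.gL_cons,
      Stmt13Aux.gL_of_not_mem (fun q hq => (hfx q hq).2),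
      Stmt13Aux.gL_of_not_mem (fun q hq => (hfy q hq).2),
      Stmt13Aux.gL_of_not_mem (fun q hq => (hfz q hq).2)]
    simp [hAB]
    omega
  have hpos1A : pos1 P nA = c := by unfold pos1; rw [hposA]; rfl
  have hpos2A : pos2 P nA = c + 3 + k := by unfold pos2; rw [hposA]; rfl
  have hpos1B : pos1 P nB = c + 1 := by unfold pos1; rw [hposB]; rfl
  have hpos2B : pos2 P nB = c + 2 + k := by unfold pos2; rw [hposB]; rfl
  -- positions of D avoid those of A and B
  have hDloc : ∀ i ∈ posL P nD, i < c ∨ (c + 2 ≤ i ∧ i < c + 2 + k) ∨ c + 4 + k ≤ i := by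
    intro i hi
    rw [Stmt13Aux.posL_eq_gL, hF, Stmt13Aux.gL_append, Stmt13Aux.gL_cons, Stmt13Aux.gL_cons,
      Stmt13Aux.gL_append, Stmt13Aux.gL_cons, Stmt13Aux.gL_cons] at hi
    simp only [if_neg (Ne.symm hDA), if_neg (Ne.symm hDB), List.nil_append,
      List.mem_append] at hi
    rcases hi with h | h | h
    · have := Stmt13Aux.gL_bounds _ _ i h; omega
    · have := Stmt13Aux.gL_bounds _ _ i h; omega
    · have := Stmt13Aux.gL_bounds _ _ i h; omega
  have hDex : ∃ q ∈ flat P 1, q.1 = nD := by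
    have h1 : nD ∈ P.reduceOption.map Prod.fst := by
      simpa [lettersP, List.mem_dedup] using hD
    rw [← Stmt13Aux.flat_names P 1, List.map_map] at h1
    simpa [List.mem_map] using h1
  have hDne : posL P nD ≠ [] := by
    rw [Stmt13Aux.posL_eq_gL]; exact Stmt13Aux.gL_ne_nil hDex 0
  have hd1m : pos1 P nD ∈ posL P nD := Stmt13Aux.headI_mem hDne
  have hd2m : pos2 P nD ∈ posL P nD := Stmt13Aux.getLast!_mem hDne
  have hd1 := hDloc _ hd1m
  have hd2 := hDloc _ hd2m
  -- projections and components
  have hfiltA : (flat P 1).filter (fun q => q.1 = nA) = [(nA, a, i1), (nA, a, i2)] := by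
    rw [hF]
    simp only [List.filter_append, List.filter_cons]
    rw [List.filter_eq_nil_iff.mpr (fun q hq => by simpa using (hfx q hq).1),
      List.filter_eq_nil_iff.mpr (fun q hq => by simpa using (hfy q hq).1),
      List.filter_eq_nil_iff.mpr (fun q hq => by simpa using (hfz q hq).1)]
    simp [Ne.symm hAB]
  have hfiltB : (flat P 1).filter (fun q => q.1 = nB) = [(nB, τ a, i1), (nB, τ a, i2)] := by
    rw [hF]
    simp only [List.filter_append, List.filter_cons]
    rw [List.filter_eq_nil_iff.mpr (fun q hq => by simpa using (hfx q hq).2),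
      List.filter_eq_nil_iff.mpr (fun q hq => by simpa using (hfy q hq).2),
      List.filter_eq_nil_iff.mpr (fun q hq => by simpa using (hfz q hq).2)]
    simp [hAB]
  have hprojA : projP P nA = a := by unfold projP; rw [hfiltA]; rfl
  have hprojB : projP P nB = τ a := by unfold projP; rw [hfiltB]; rfl
  have hcomp1A : comp1 P nA = i1 := by unfold comp1; rw [hfiltA]; rfl
  have hcomp2A : comp2 P nA = i2 := by unfold comp2; rw [hfiltA]; rfl
  have hcomp1B : comp1 P nB = i1 := by unfold comp1; rw [hfiltB]; rfl
  have hcomp2B : comp2 P nB = i2 := by unfold comp2; rw [hfiltB]; rfl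
  -- epsilon-sign relation
  have horba : orb (τ a) = orb a := horbτ a
  have heps : eps rep orb (τ a) = - eps rep orb a := by
    unfold eps
    rw [horba]
    rcases hrepor a with h | h
    · have h2 : τ a ≠ rep (orb a) := fun hh => hAfree (hh.trans h.symm)
      rw [if_neg h2, if_pos h]
    · have h2 : τ a = rep (orb a) := by
        conv_lhs => rw [h]
        exact hinv _
      have h3 : a ≠ rep (orb a) := fun hh => hAfree (by rw [h2, ← hh])
      rw [if_pos h2, if_neg h3]; norm_num
  intro j
  have hiff1 : (pos1 P nD < c ∧ c < pos2 P nD ∧ pos2 P nD < c + 3 + k ∧ i2 = j)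
      ↔ (pos1 P nD < c + 1 ∧ c + 1 < pos2 P nD ∧ pos2 P nD < c + 2 + k ∧ i2 = j) := by
    constructor <;> rintro ⟨h1, h2, h3, h4⟩ <;> exact ⟨by omega, by omega, by omega, h4⟩
  have hiff2 : (c < pos1 P nD ∧ pos1 P nD < c + 3 + k ∧ c + 3 + k < pos2 P nD ∧ i1 = j)
      ↔ (c + 1 < pos1 P nD ∧ pos1 P nD < c + 2 + k ∧ c + 2 + k < pos2 P nD ∧ i1 = j) := by
    constructor <;> rintro ⟨h1, h2, h3, h4⟩ <;> exact ⟨by omega, by omega, by omega, h4⟩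
  have key : sigmaHat rep orb P j nD nA = - sigmaHat rep orb P j nD nB := by
    unfold sigmaHat
    rw [hpos1A, hpos2A, hpos1B, hpos2B, hcomp1A, hcomp2A, hcomp1B, hcomp2B,
      hprojA, hprojB, horba, heps]
    by_cases h1 : pos1 P nD < c ∧ c < pos2 P nD ∧ pos2 P nD < c + 3 + k ∧ i2 = j
    · rw [if_pos h1, if_pos (hiff1.mp h1)]
      simp [neg_smul]
    · rw [if_neg h1, if_neg (fun hh => h1 (hiff1.mpr hh))]
      by_cases h2 : c < pos1 P nD ∧ pos1 P nD < c + 3 + k ∧ c + 3 + k < pos2 P nD ∧ i1 = j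
      · rw [if_pos h2, if_pos (hiff2.mp h2)]
        simp [neg_smul]
      · rw [if_neg h2, if_neg (fun hh => h2 (hiff2.mpr hh))]
        simp
  have hsum : kmk l (sigmaHat rep orb P j nD nA) + kmk l (sigmaHat rep orb P j nD nB) = 0 := by
    unfold kmk
    rw [key]
    exact congrArg (QuotientAddGroup.mk (s := Ksub l)) (neg_add_cancel _)
  exact ⟨eq_neg_of_add_eq_zero_left hsum, hsum⟩
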